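/- Let n be a positive integer and let A, W, Z be real n×n matrices such that A is invertible, W is symmetric positive semidefinite, and Z is positive semidefinite in the general (not necessarily symmetric) sense, i.e., xᵀ·Z·x ≥ 0 for all x ∈ ℝⁿ. Then the 2n×2n block matrix [[A, −W], [−Z, −Aᵀ]] is invertible; equivalently, for every right-hand side (B, C) ∈ ℝⁿ × ℝⁿ the system A·U − W·M = B, −Z·U − Aᵀ·M = C has a unique solution (U, M). -/

import Mathlib

open Matrix

/-- If `A` is invertible, `W` is symmetric positive semidefinite, and `Z` satisfies
`xᵀ·Z·x ≥ 0` for all `x`, then the block matrix `[[A, −W], [−Z, −Aᵀ]]` is invertible;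
equivalently, for every right-hand side `(B, C)` the system `A·U − W·M = B`,
`−Z·U − Aᵀ·M = C` has a unique solution `(U, M)`. -/
theorem stmt_1 (n : ℕ) (hn : 0 < n)
    (A W Z : Matrix (Fin n) (Fin n) ℝ)
    (hA : IsUnit A)
    (hW : W.PosSemidef)
    (hZ : ∀ x : Fin n → ℝ, 0 ≤ x ⬝ᵥ Z.mulVec x) :
    IsUnit (Matrix.fromBlocks A (-W) (-Z) (-Aᵀ)) ∧
      ∀ B C : Fin n → ℝ, ∃! UM : (Fin n → ℝ) × (Fin n → ℝ),
        A.mulVec UM.1 - W.mulVec UM.2 = B ∧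
        -(Z.mulVec UM.1) - Aᵀ.mulVec UM.2 = C := by
  set S : Matrix (Fin n ⊕ Fin n) (Fin n ⊕ Fin n) ℝ :=
    Matrix.fromBlocks A (-W) (-Z) (-Aᵀ) with hS
  -- key: the kernel of S is trivial
  have hker : ∀ v : (Fin n ⊕ Fin n) → ℝ, S.mulVec v = 0 → v = 0 := by
    intro v hv
    set u : Fin n → ℝ := v ∘ Sum.inl with hu
    set m : Fin n → ℝ := v ∘ Sum.inr with hm
    have hvem : v = Sum.elim u m := by
      funext i; cases i <;> rfl
    rw [hvem, hS, Matrix.fromBlocks_mulVec] at hv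
    have h1 : A.mulVec u + (-W).mulVec m = 0 := congrFun hv (Sum.inl (Fin.mk 0 hn))
      |> fun _ => by
        have := congrArg (fun f => f ∘ Sum.inl) hv
        funext i
        exact congrFun this i
    have h2 : (-Z).mulVec u + (-Aᵀ).mulVec m = 0 := by
      have := congrArg (fun f => f ∘ Sum.inr) hv
      funext i
      exact congrFun this i
    rw [Matrix.neg_mulVec, add_neg_eq_zero] at h1
    rw [Matrix.neg_mulVec, Matrix.neg_mulVec, neg_add_eq_zero] at h2
    -- compute m ⬝ᵥ A u two ways
    have h2' : Aᵀ.mulVec m = -(Z.mulVec u) := by rw [h2, neg_neg]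
    have key : m ⬝ᵥ A.mulVec u = -(u ⬝ᵥ Z.mulVec u) := by
      rw [Matrix.dotProduct_mulVec, ← Matrix.mulVec_transpose, h2',
        neg_dotProduct, dotProduct_comm]
    have key2 : m ⬝ᵥ W.mulVec m = -(u ⬝ᵥ Z.mulVec u) := by rw [← h1, key]
    have hWm0 : W.mulVec m = 0 := by
      have hnn : 0 ≤ m ⬝ᵥ W.mulVec m := by simpa using hW.dotProduct_mulVec_nonneg m
      have hnp : m ⬝ᵥ W.mulVec m ≤ 0 := by
        rw [key2]; exact neg_nonpos.mpr (hZ u)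
      have : m ⬝ᵥ W.mulVec m = 0 := le_antisymm hnp hnn
      have := (hW.dotProduct_mulVec_zero_iff m).mp (by simpa using this)
      exact this
    have hu0 : u = 0 := by
      have hAu : A.mulVec u = 0 := by rw [h1, hWm0]
      have : A.mulVec u = A.mulVec 0 := by simp [hAu]
      exact Matrix.mulVec_injective_iff_isUnit.mpr hA this
    have hm0 : m = 0 := by
      have hAm : Aᵀ.mulVec m = 0 := by
        rw [h2', hu0]; simp
      have : Aᵀ.mulVec m = Aᵀ.mulVec 0 := by simp [hAm]
      exact Matrix.mulVec_injective_iff_isUnit.mpr ((Matrix.isUnit_transpose A).mpr hA) this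
    rw [hvem, hu0, hm0]
    funext i; cases i <;> simp
  have hSinj : Function.Injective S.mulVec := by
    intro x y hxy
    have : S.mulVec (x - y) = 0 := by
      rw [Matrix.mulVec_sub, hxy, sub_self]
    have := hker _ this
    exact sub_eq_zero.mp this
  have hSunit : IsUnit S := Matrix.mulVec_injective_iff_isUnit.mp hSinj
  refine ⟨hSunit, ?_⟩
  intro B C
  have hdet : IsUnit S.det := (Matrix.isUnit_iff_isUnit_det S).mp hSunit
  have hinv : S⁻¹ * S = 1 := Matrix.nonsing_inv_mul S hdet
  have hinv' : S * S⁻¹ = 1 := Matrix.mul_nonsing_inv S hdet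
  set v : (Fin n ⊕ Fin n) → ℝ := S⁻¹.mulVec (Sum.elim B C) with hv
  have hSv : S.mulVec v = Sum.elim B C := by
    rw [hv, Matrix.mulVec_mulVec, hinv', Matrix.one_mulVec]
  -- translate system equations to mulVec of S
  have heq : ∀ UM : (Fin n → ℝ) × (Fin n → ℝ),
      (A.mulVec UM.1 - W.mulVec UM.2 = B ∧
        -(Z.mulVec UM.1) - Aᵀ.mulVec UM.2 = C) ↔
      S.mulVec (Sum.elim UM.1 UM.2) = Sum.elim B C := by
    intro UM
    rw [hS, Matrix.fromBlocks_mulVec]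
    constructor
    · rintro ⟨e1, e2⟩
      funext i
      cases i with
      | inl i => simpa [Matrix.neg_mulVec, sub_eq_add_neg] using congrFun e1 i
      | inr i => simpa [Matrix.neg_mulVec, sub_eq_add_neg] using congrFun e2 i
    · intro h
      constructor
      · funext i
        have := congrFun h (Sum.inl i)
        simpa [Matrix.neg_mulVec, sub_eq_add_neg] using this
      · funext i
        have := congrFun h (Sum.inr i)
        simpa [Matrix.neg_mulVec, sub_eq_add_neg] using this
  refine ⟨(v ∘ Sum.inl, v ∘ Sum.inr), ?_, ?_⟩
  · exact (heq (v ∘ Sum.inl, v ∘ Sum.inr)).mpr (by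
      have hve : Sum.elim (v ∘ Sum.inl) (v ∘ Sum.inr) = v := by
        funext i; cases i <;> rfl
      rw [hve, hSv])
  · rintro ⟨U, M⟩ hUM
    have hUM' := (heq (U, M)).mp hUM
    have := hSinj (hUM'.trans hSv.symm)
    have h1 : U = v ∘ Sum.inl := by
      funext i; exact congrFun this (Sum.inl i)
    have h2 : M = v ∘ Sum.inr := by
      funext i; exact congrFun this (Sum.inr i)
    simp [h1, h2]
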